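/- Suppose not all nonflexible loads are zero or L_e > 0; let t̄ ∈ {1,…,T} be such that L_e^{(t̄−1)} < L_e ≤ L_e^{(t̄)}. Then the optimal charging cost equals V(L_e) = (∑_{s=1}^{t̄} η_s^{−1/(n−1)})^{−(n−1)} · (L_e + α_{t̄})^n + β_{t̄}, and the minimum defining V(L_e) is attained by some feasible charging profile. -/

import Mathlib

open Finset

/-- Total electricity cost of a charging profile `ℓe` over time slots `1,…,T`,
with cost functions `f_t(ℓ) = η_t ℓ^n`. -/
noncomputable def chargCost (T : ℕ) (n : ℝ) (η ℓ0 ℓe : ℕ → ℝ) : ℝ :=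
  ∑ t ∈ Finset.Icc 1 T, η t * (ℓ0 t + ℓe t) ^ n

/-- Feasibility of a charging profile: nonnegative, and summing to the charging need `Le`. -/
def ChargFeasible (T : ℕ) (Le : ℝ) (ℓe : ℕ → ℝ) : Prop :=
  (∀ t ∈ Finset.Icc 1 T, 0 ≤ ℓe t) ∧ ∑ t ∈ Finset.Icc 1 T, ℓe t = Le

/-- Optimal charging cost `V(L_e)`. -/
noncomputable def Vopt (T : ℕ) (n : ℝ) (η ℓ0 : ℕ → ℝ) (Le : ℝ) : ℝ :=
  sInf {c | ∃ ℓe, ChargFeasible T Le ℓe ∧ chargCost T n η ℓ0 ℓe = c}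

/-- Cumulative nonflexible load `α_t = ∑_{s=1}^t ℓ_{0,s}`. -/
noncomputable def alphaC (ℓ0 : ℕ → ℝ) (t : ℕ) : ℝ := ∑ s ∈ Finset.Icc 1 t, ℓ0 s

/-- Cost of the nonflexible load after time `t`: `β_t = ∑_{s=t+1}^T f_s(ℓ_{0,s})`. -/
noncomputable def betaC (T : ℕ) (n : ℝ) (η ℓ0 : ℕ → ℝ) (t : ℕ) : ℝ :=
  ∑ s ∈ Finset.Icc (t + 1) T, η s * ℓ0 s ^ n

/-- Energy thresholds `L_e^{(t)}` (for `0 ≤ t ≤ T-1`, with `L_e^{(0)} = 0`). -/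
noncomputable def Lth (n : ℝ) (η ℓ0 : ℕ → ℝ) (t : ℕ) : ℝ :=
  if t = 0 then 0
  else (∑ s ∈ Finset.Icc 1 t, (η (t + 1) / η s) ^ (1 / (n - 1))) * ℓ0 (t + 1) - alphaC ℓ0 t

/-- Charging unit price `λ_e(L_e) = V(L_e) / (L_e + α_T)`. -/
noncomputable def lamE (T : ℕ) (n : ℝ) (η ℓ0 : ℕ → ℝ) (Le : ℝ) : ℝ :=
  Vopt T n η ℓ0 Le / (Le + alphaC ℓ0 T)

lemma bern_aux {n a x : ℝ} (hn : 2 ≤ n) (ha : 0 ≤ a) (hx : 0 ≤ x) :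
    a ^ n + n * a ^ (n - 1) * (x - a) ≤ x ^ n := by
  rcases eq_or_lt_of_le ha with h0 | hapos
  · rw [← h0]
    rw [Real.zero_rpow (by linarith : n ≠ 0), Real.zero_rpow (by intro h; linarith : n - 1 ≠ 0)]
    simpa using Real.rpow_nonneg hx n
  · have hane : a ≠ 0 := ne_of_gt hapos
    have hb := one_add_mul_self_le_rpow_one_add
      (s := x / a - 1) (by
        have : (0:ℝ) ≤ x / a := by positivity
        linarith) (le_trans one_le_two hn)
    rw [add_sub_cancel] at hb
    have han : (0:ℝ) < a ^ n := Real.rpow_pos_of_pos hapos n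
    have h1 : (x / a) ^ n = x ^ n / a ^ n := Real.div_rpow hx ha n
    have h2 : a ^ n = a ^ (n - 1) * a := by
      rw [← Real.rpow_add_one hane]; ring_nf
    have h3 := mul_le_mul_of_nonneg_right hb han.le
    rw [h1, div_mul_cancel₀ _ (ne_of_gt han)] at h3
    calc a ^ n + n * a ^ (n - 1) * (x - a)
        = (1 + n * (x / a - 1)) * a ^ n := by
          rw [h2]; field_simp
      _ ≤ x ^ n := h3

lemma rpow_rpow_inv' {b p : ℝ} (hb : 0 ≤ b) (hp : p ≠ 0) : (b ^ p) ^ (1/p) = b := by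
  rw [← Real.rpow_mul hb, mul_one_div, div_self hp, Real.rpow_one]

lemma root_le {p : ℝ} (hp : 0 < p) {a b c d : ℝ} (ha : 0 ≤ a) (hc : 0 ≤ c) (hb : 0 ≤ b) (hd : 0 ≤ d)
    (h : a * b ^ p ≤ c * d ^ p) : a ^ (1/p) * b ≤ c ^ (1/p) * d := by
  have h1 : (a * b ^ p) ^ (1/p) ≤ (c * d ^ p) ^ (1/p) :=
    Real.rpow_le_rpow (by positivity) h (by positivity)
  rwa [Real.mul_rpow ha (by positivity), Real.mul_rpow hc (by positivity),
    rpow_rpow_inv' hb (ne_of_gt hp), rpow_rpow_inv' hd (ne_of_gt hp)] at h1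

lemma sum_split {T tb : ℕ} (h2 : tb ≤ T) (f : ℕ → ℝ) :
    ∑ t ∈ Icc 1 T, f t = ∑ t ∈ Icc 1 tb, f t + ∑ t ∈ Icc (tb+1) T, f t := by
  rw [show (1:ℕ) = 0 + 1 from rfl, Finset.Icc_add_one_left_eq_Ioc, Finset.Icc_add_one_left_eq_Ioc, zero_add, Finset.Icc_add_one_left_eq_Ioc]
  exact (Finset.sum_Ioc_consecutive f (Nat.zero_le tb) h2).symm

/-- Prop. 1: if not all nonflexible loads are zero or `L_e > 0`, and
`L_e^{(t̄-1)} < L_e ≤ L_e^{(t̄)}`, then the optimal charging cost is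
`V(L_e) = (∑_{s=1}^{t̄} η_s^{-1/(n-1)})^{-(n-1)} (L_e + α_{t̄})^n + β_{t̄}`,
and the minimum defining `V(L_e)` is attained. -/
theorem optimal_charging_cost_formula
    (T : ℕ) (n : ℝ) (η ℓ0 : ℕ → ℝ)
    (hT : 2 ≤ T) (hn : (2 : ℝ) ≤ n)
    (hη : ∀ t ∈ Finset.Icc 1 T, 0 < η t)
    (hℓ0 : ∀ t ∈ Finset.Icc 1 T, 0 ≤ ℓ0 t)
    (hord : ∀ s t : ℕ, 1 ≤ s → s ≤ t → t ≤ T →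
      η s * ℓ0 s ^ (n - 1) ≤ η t * ℓ0 t ^ (n - 1))
    (Le : ℝ)
    (hpos : (¬ ∀ t ∈ Finset.Icc 1 T, ℓ0 t = 0) ∨ 0 < Le)
    (tb : ℕ) (htb : tb ∈ Finset.Icc 1 T)
    (hlow : Lth n η ℓ0 (tb - 1) < Le)
    (hhigh : tb < T → Le ≤ Lth n η ℓ0 tb) :
    Vopt T n η ℓ0 Le =
      (∑ s ∈ Finset.Icc 1 tb, η s ^ (-(1 / (n - 1)))) ^ (-(n - 1))
        * (Le + alphaC ℓ0 tb) ^ n + betaC T n η ℓ0 tb ∧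
    IsLeast {c | ∃ ℓe, ChargFeasible T Le ℓe ∧ chargCost T n η ℓ0 ℓe = c}
      ((∑ s ∈ Finset.Icc 1 tb, η s ^ (-(1 / (n - 1)))) ^ (-(n - 1))
        * (Le + alphaC ℓ0 tb) ^ n + betaC T n η ℓ0 tb) := by
  obtain ⟨htb1, htbT⟩ := Finset.mem_Icc.mp htb
  obtain ⟨k, rfl⟩ : ∃ k, tb = k + 1 := ⟨tb - 1, by omega⟩
  clear htb
  simp only [Nat.add_sub_cancel] at hlow
  have hp0 : (0:ℝ) < n - 1 := by linarith
  have hpne : n - 1 ≠ 0 := ne_of_gt hp0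
  set E : ℝ := -(1 / (n - 1)) with hE
  set S := ∑ s ∈ Finset.Icc 1 (k+1), η s ^ E with hSdef
  -- positivity of η on relevant ranges
  have hηpos : ∀ s, 1 ≤ s → s ≤ T → 0 < η s := fun s h1 h2 => hη s (Finset.mem_Icc.mpr ⟨h1, h2⟩)
  have hℓ0nn : ∀ s, 1 ≤ s → s ≤ T → 0 ≤ ℓ0 s := fun s h1 h2 => hℓ0 s (Finset.mem_Icc.mpr ⟨h1, h2⟩)
  have hSpos : 0 < S := by
    apply Finset.sum_pos
    · intro s hs
      obtain ⟨h1, h2⟩ := Finset.mem_Icc.mp hs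
      exact Real.rpow_pos_of_pos (hηpos s h1 (le_trans h2 htbT)) E
    · exact ⟨1, Finset.mem_Icc.mpr ⟨le_refl 1, by omega⟩⟩
  -- basic rpow facts
  have hcancel : ∀ {x : ℝ}, 0 < x → x ^ E * x ^ (1/(n-1)) = 1 := by
    intro x hx
    rw [← Real.rpow_add hx, hE, neg_add_cancel, Real.rpow_zero]
  have hdiv : ∀ s t : ℕ, 1 ≤ s → s ≤ T → 1 ≤ t → t ≤ T →
      (η t / η s) ^ (1/(n-1)) = η t ^ (1/(n-1)) * η s ^ E := by
    intro s t hs1 hs2 ht1 ht2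
    rw [Real.div_rpow (hηpos t ht1 ht2).le (hηpos s hs1 hs2).le, hE, Real.rpow_neg (hηpos s hs1 hs2).le,
      div_eq_mul_inv]
  have hmono : ∀ s t : ℕ, 1 ≤ s → s ≤ t → t ≤ T →
      η s ^ (1/(n-1)) * ℓ0 s ≤ η t ^ (1/(n-1)) * ℓ0 t := by
    intro s t h1 h2 h3
    exact root_le hp0 (hηpos s h1 (le_trans h2 h3)).le (hηpos t (le_trans h1 h2) h3).le
      (hℓ0nn s h1 (le_trans h2 h3)) (hℓ0nn t (le_trans h1 h2) h3) (hord s t h1 h2 h3)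
  have hℓ0le : ∀ s t : ℕ, 1 ≤ s → s ≤ t → t ≤ T →
      ℓ0 s ≤ (η t / η s) ^ (1/(n-1)) * ℓ0 t := by
    intro s t h1 h2 h3
    rw [hdiv s t h1 (le_trans h2 h3) (le_trans h1 h2) h3]
    have e1 : ℓ0 s = η s ^ E * (η s ^ (1/(n-1)) * ℓ0 s) := by
      rw [← mul_assoc, hcancel (hηpos s h1 (le_trans h2 h3)), one_mul]
    calc ℓ0 s = η s ^ E * (η s ^ (1/(n-1)) * ℓ0 s) := e1
      _ ≤ η s ^ E * (η t ^ (1/(n-1)) * ℓ0 t) := by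
          apply mul_le_mul_of_nonneg_left (hmono s t h1 h2 h3)
          exact (Real.rpow_pos_of_pos (hηpos s h1 (le_trans h2 h3)) E).le
      _ = η t ^ (1/(n-1)) * η s ^ E * ℓ0 t := by ring
  have hLthf : ∀ m : ℕ, Lth n η ℓ0 m =
      (∑ s ∈ Finset.Icc 1 m, (η (m + 1) / η s) ^ (1/(n-1))) * ℓ0 (m + 1) - alphaC ℓ0 m := by
    intro m
    rcases Nat.eq_zero_or_pos m with rfl | hm
    · simp [Lth, alphaC]
    · rw [Lth, if_neg (by omega)]
  -- Lth k ≥ 0, hence Le > 0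
  have hLthk : 0 ≤ Lth n η ℓ0 k := by
    rw [hLthf k, sub_nonneg, alphaC, Finset.sum_mul]
    apply Finset.sum_le_sum
    intro s hs
    obtain ⟨h1, h2⟩ := Finset.mem_Icc.mp hs
    exact hℓ0le s (k+1) h1 (by omega) (by omega)
  have hLe : 0 < Le := lt_of_le_of_lt hLthk hlow
  -- the key sum identity: S * (η m ^ q * ℓ0 m) for any m
  have hSmul : ∀ m : ℕ, 1 ≤ m → m ≤ T →
      (∑ s ∈ Finset.Icc 1 (k+1), (η m / η s) ^ (1/(n-1))) = η m ^ (1/(n-1)) * S := by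
    intro m h1 h2
    rw [hSdef, Finset.mul_sum]
    apply Finset.sum_congr rfl
    intro s hs
    obtain ⟨hs1, hs2⟩ := Finset.mem_Icc.mp hs
    exact hdiv s m hs1 (by omega) h1 h2
  have halpha_succ : alphaC ℓ0 (k+1) = alphaC ℓ0 k + ℓ0 (k+1) := by
    rw [alphaC, alphaC, Finset.sum_Icc_succ_top (by omega : 1 ≤ k + 1)]
  have halphann : 0 ≤ alphaC ℓ0 (k+1) := by
    apply Finset.sum_nonneg
    intro s hs
    obtain ⟨h1, h2⟩ := Finset.mem_Icc.mp hs
    exact hℓ0nn s h1 (by omega)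
  set A := Le + alphaC ℓ0 (k+1) with hAdef
  have hApos : 0 < A := by rw [hAdef]; linarith
  -- upper bound on the peak marginal among active slots
  have hkeyA : S * (η (k+1) ^ (1/(n-1)) * ℓ0 (k+1)) ≤ A := by
    have e1 : S * (η (k+1) ^ (1/(n-1)) * ℓ0 (k+1))
        = (∑ s ∈ Finset.Icc 1 k, (η (k+1) / η s) ^ (1/(n-1))) * ℓ0 (k+1) + ℓ0 (k+1) := by
      rw [hSdef, Finset.sum_Icc_succ_top (by omega : 1 ≤ k + 1), add_mul, Finset.sum_mul,
        Finset.sum_mul]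
      congr 1
      · apply Finset.sum_congr rfl
        intro s hs
        obtain ⟨h1, h2⟩ := Finset.mem_Icc.mp hs
        rw [hdiv s (k+1) h1 (by omega) (by omega) htbT]
        ring
      · rw [show η (k+1) ^ E * (η (k+1) ^ (1/(n-1)) * ℓ0 (k+1)) =
            (η (k+1) ^ E * η (k+1) ^ (1/(n-1))) * ℓ0 (k+1) from by ring,
          hcancel (hηpos (k+1) (by omega) htbT), one_mul]
    rw [e1]
    have := hLthf k
    rw [hAdef, halpha_succ]
    linarith [hlow, (hLthf k).symm.le]
  set c := A / S with hcdef
  have hcpos : 0 < c := div_pos hApos hSpos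
  have hlevel : ∀ t, 1 ≤ t → t ≤ k + 1 → ℓ0 t ≤ η t ^ E * c := by
    intro t h1 h2
    have hm := hmono t (k+1) h1 h2 htbT
    have hc2 : η (k+1) ^ (1/(n-1)) * ℓ0 (k+1) ≤ c := by
      rw [hcdef, le_div_iff₀ hSpos]
      linarith [hkeyA]
    have hηt : 0 < η t := hηpos t h1 (by omega)
    calc ℓ0 t = η t ^ E * (η t ^ (1/(n-1)) * ℓ0 t) := by
          rw [← mul_assoc, hcancel hηt, one_mul]
      _ ≤ η t ^ E * c := by
          apply mul_le_mul_of_nonneg_left (le_trans hm hc2)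
          exact (Real.rpow_pos_of_pos hηt E).le
  set ℓopt : ℕ → ℝ := fun t => if t ∈ Finset.Icc 1 (k+1) then η t ^ E * c - ℓ0 t else 0
    with hℓopt
  have hoptmem : ∀ t, t ∈ Finset.Icc 1 (k+1) → ℓopt t = η t ^ E * c - ℓ0 t := by
    intro t ht; rw [hℓopt]; simp only [ht, if_pos]
  have hoptout : ∀ t, t ∉ Finset.Icc 1 (k+1) → ℓopt t = 0 := by
    intro t ht; simp only [hℓopt, if_neg ht]
  have hoptnn : ∀ t ∈ Finset.Icc 1 T, 0 ≤ ℓopt t := by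
    intro t ht
    by_cases h : t ∈ Finset.Icc 1 (k+1)
    · rw [hoptmem t h]
      obtain ⟨h1, h2⟩ := Finset.mem_Icc.mp h
      linarith [hlevel t h1 h2]
    · rw [hoptout t h]
  have hoptsum : ∑ t ∈ Finset.Icc 1 T, ℓopt t = Le := by
    rw [sum_split htbT ℓopt]
    have e2 : ∑ t ∈ Finset.Icc (k+1+1) T, ℓopt t = 0 := by
      apply Finset.sum_eq_zero
      intro t ht
      obtain ⟨h1, h2⟩ := Finset.mem_Icc.mp ht
      exact hoptout t (by simp only [Finset.mem_Icc]; omega)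
    rw [e2, add_zero, Finset.sum_congr rfl (fun t ht => hoptmem t ht),
      Finset.sum_sub_distrib, ← Finset.sum_mul, ← hSdef, ← alphaC]
    rw [hcdef, mul_div_cancel₀ _ (ne_of_gt hSpos), hAdef]
    ring
  have hfeas : ChargFeasible T Le ℓopt := ⟨hoptnn, hoptsum⟩
  -- exponent identities
  have hexp1 : 1 + E * n = E := by
    rw [hE]; field_simp; ring
  have hexp2 : E * (n - 1) = -1 := by
    rw [hE]; field_simp
  -- value of the optimal cost
  have hcost : chargCost T n η ℓ0 ℓopt = S ^ (-(n-1)) * A ^ n + betaC T n η ℓ0 (k+1) := by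
    rw [chargCost, sum_split htbT]
    have e3 : ∑ t ∈ Finset.Icc (k+1+1) T, η t * (ℓ0 t + ℓopt t) ^ n = betaC T n η ℓ0 (k+1) := by
      rw [betaC]
      apply Finset.sum_congr rfl
      intro t ht
      obtain ⟨h1, h2⟩ := Finset.mem_Icc.mp ht
      rw [hoptout t (by simp only [Finset.mem_Icc]; omega), add_zero]
    rw [e3]
    congr 1
    have e4 : ∀ t ∈ Finset.Icc 1 (k+1), η t * (ℓ0 t + ℓopt t) ^ n = η t ^ E * c ^ n := by
      intro t ht
      obtain ⟨h1, h2⟩ := Finset.mem_Icc.mp ht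
      have hηt : 0 < η t := hηpos t h1 (by omega)
      rw [hoptmem t ht, add_sub_cancel]
      rw [Real.mul_rpow (Real.rpow_pos_of_pos hηt E).le hcpos.le, ← Real.rpow_mul hηt.le]
      nth_rewrite 1 [← Real.rpow_one (η t)]
      rw [← mul_assoc, ← Real.rpow_add hηt, hexp1]
    rw [Finset.sum_congr rfl e4, ← Finset.sum_mul, ← hSdef]
    have hc_n : c ^ n = A ^ n / S ^ n := by rw [hcdef, Real.div_rpow hApos.le hSpos.le]
    have hSn : S ^ (-(n-1)) = S * (S ^ n)⁻¹ := by
      rw [show -(n-1) = 1 + -n from by ring, Real.rpow_add hSpos, Real.rpow_one,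
        Real.rpow_neg hSpos.le]
    rw [hc_n, hSn, div_eq_mul_inv]
    ring
  -- lower bound
  have hlb : ∀ v ∈ {cv | ∃ ℓe, ChargFeasible T Le ℓe ∧ chargCost T n η ℓ0 ℓe = cv},
      S ^ (-(n-1)) * A ^ n + betaC T n η ℓ0 (k+1) ≤ v := by
    rintro v ⟨ℓe, ⟨hnn, hsum⟩, rfl⟩
    have key : ∀ t ∈ Finset.Icc 1 T,
        η t * (ℓ0 t + ℓopt t) ^ n + n * c ^ (n-1) * (ℓe t - ℓopt t)
          ≤ η t * (ℓ0 t + ℓe t) ^ n := by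
      intro t ht
      obtain ⟨h1, h2⟩ := Finset.mem_Icc.mp ht
      have hηt : 0 < η t := hηpos t h1 h2
      have hx1 : 0 ≤ ℓ0 t + ℓopt t := by
        have := hoptnn t ht; have := hℓ0nn t h1 h2; linarith
      have hx2 : 0 ≤ ℓ0 t + ℓe t := by
        have := hnn t ht; have := hℓ0nn t h1 h2; linarith
      have hb2 := mul_le_mul_of_nonneg_left (bern_aux hn hx1 hx2) hηt.le
      have hring : η t * ((ℓ0 t + ℓopt t) ^ n
            + n * (ℓ0 t + ℓopt t) ^ (n-1) * ((ℓ0 t + ℓe t) - (ℓ0 t + ℓopt t)))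
          = η t * (ℓ0 t + ℓopt t) ^ n
            + n * (η t * (ℓ0 t + ℓopt t) ^ (n-1)) * (ℓe t - ℓopt t) := by ring
      rw [hring] at hb2
      have hmarg : n * c ^ (n-1) * (ℓe t - ℓopt t)
          ≤ n * (η t * (ℓ0 t + ℓopt t) ^ (n-1)) * (ℓe t - ℓopt t) := by
        by_cases hmem : t ∈ Finset.Icc 1 (k+1)
        · have e5 : η t * (ℓ0 t + ℓopt t) ^ (n-1) = c ^ (n-1) := by
            rw [hoptmem t hmem, add_sub_cancel,
              Real.mul_rpow (Real.rpow_pos_of_pos hηt E).le hcpos.le,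
              ← Real.rpow_mul hηt.le, hexp2, Real.rpow_neg_one, ← mul_assoc,
              mul_inv_cancel₀ (ne_of_gt hηt), one_mul]
          rw [e5]
        · have htk : k + 1 < t := by
            by_contra h; exact hmem (Finset.mem_Icc.mpr ⟨h1, by omega⟩)
          have hTk : k + 1 < T := by omega
          have hopt0 : ℓopt t = 0 := hoptout t hmem
          have hc_le : c ^ (n-1) ≤ η t * (ℓ0 t + ℓopt t) ^ (n-1) := by
            rw [hopt0, add_zero]
            have hη2 : 0 < η (k+2) := hηpos (k+2) (by omega) (by omega)
            have hhi := hhigh hTk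
            rw [hLthf (k+1), hSmul (k+2) (by omega) (by omega)] at hhi
            have hcle : c ≤ η (k+2) ^ (1/(n-1)) * ℓ0 (k+2) := by
              rw [hcdef, div_le_iff₀ hSpos, hAdef]
              nlinarith [hhi]
            have h6 : c ^ (n-1) ≤ (η (k+2) ^ (1/(n-1)) * ℓ0 (k+2)) ^ (n-1) :=
              Real.rpow_le_rpow hcpos.le hcle hp0.le
            have h7 : (η (k+2) ^ (1/(n-1)) * ℓ0 (k+2)) ^ (n-1)
                = η (k+2) * ℓ0 (k+2) ^ (n-1) := by
              rw [Real.mul_rpow (by positivity) (hℓ0nn (k+2) (by omega) (by omega)),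
                ← Real.rpow_mul hη2.le, one_div, inv_mul_cancel₀ hpne, Real.rpow_one]
            calc c ^ (n-1) ≤ η (k+2) * ℓ0 (k+2) ^ (n-1) := by rw [← h7]; exact h6
              _ ≤ η t * ℓ0 t ^ (n-1) := hord (k+2) t (by omega) (by omega) h2
          have hle0 : 0 ≤ ℓe t - ℓopt t := by rw [hopt0, sub_zero]; exact hnn t ht
          apply mul_le_mul_of_nonneg_right _ hle0
          exact mul_le_mul_of_nonneg_left hc_le (by linarith : (0:ℝ) ≤ n)
      linarith
    have hs2 := Finset.sum_le_sum key
    rw [Finset.sum_add_distrib] at hs2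
    have hz : ∑ t ∈ Finset.Icc 1 T, n * c ^ (n-1) * (ℓe t - ℓopt t) = 0 := by
      rw [← Finset.mul_sum, Finset.sum_sub_distrib, hsum, hoptsum, sub_self, mul_zero]
    rw [hz, add_zero] at hs2
    calc S ^ (-(n-1)) * A ^ n + betaC T n η ℓ0 (k+1)
        = chargCost T n η ℓ0 ℓopt := hcost.symm
      _ ≤ chargCost T n η ℓ0 ℓe := hs2
  have hleast : IsLeast {cv | ∃ ℓe, ChargFeasible T Le ℓe ∧ chargCost T n η ℓ0 ℓe = cv}
      (S ^ (-(n-1)) * A ^ n + betaC T n η ℓ0 (k+1)) := ⟨⟨ℓopt, hfeas, hcost⟩, hlb⟩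
  exact ⟨hleast.csInf_eq, hleast⟩
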